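/- For any cube Q ⊂ ℝⁿ, any β ≥ 0, any ε ∈ (0,1], and any locally integrable f, the Luxemburg norm satisfies ‖f‖_{L(log L)^β, Q} ≤ C(β) ε^{−β} (|Q|^{-1} ∫_Q |f|^{1+ε})^{1/(1+ε)}. -/

import Mathlib

open MeasureTheory Set
open scoped ENNReal

noncomputable def auxK (β : ℝ) : ℝ := Real.exp 1 * (1 + β ^ β)

lemma auxK_ge_one (β : ℝ) (hβ : 0 ≤ β) : 1 ≤ auxK β := by
  have h1 : (1:ℝ) ≤ Real.exp 1 := by
    have := Real.add_one_le_exp (1:ℝ); linarith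
  have h2 : (0:ℝ) ≤ β ^ β := Real.rpow_nonneg hβ β
  unfold auxK; nlinarith

lemma real_subadd {a b ε : ℝ} (ha : 0 ≤ a) (hb : 0 ≤ b) (hε : 0 ≤ ε) (hε1 : ε ≤ 1) :
    (a + b) ^ ε ≤ a ^ ε + b ^ ε := by
  have := NNReal.rpow_add_le_add_rpow (a.toNNReal) (b.toNNReal) hε hε1
  have h' := NNReal.coe_le_coe.2 this
  push_cast at h'
  rwa [Real.coe_toNNReal _ ha, Real.coe_toNNReal _ hb] at h'

lemma ptwise_log (β ε t : ℝ) (hβ : 0 ≤ β) (hε : 0 < ε) (hε1 : ε ≤ 1) (ht : 0 ≤ t) :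
    Real.log (Real.exp 1 + t) ^ β ≤ auxK β * ε ^ (-β) * (1 + t ^ ε) := by
  have he : (1:ℝ) ≤ Real.exp 1 := by
    have := Real.add_one_le_exp (1:ℝ); linarith
  have het : (0:ℝ) < Real.exp 1 + t := by linarith
  have htε : (0:ℝ) ≤ t ^ ε := Real.rpow_nonneg ht ε
  have hεβ' : (0:ℝ) ≤ ε ^ (-β) := (Real.rpow_pos_of_pos hε _).le
  rcases eq_or_lt_of_le hβ with hβ0 | hβpos
  · rw [← hβ0]
    simp only [Real.rpow_zero, neg_zero]
    have := auxK_ge_one 0 le_rfl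
    have h00 : auxK β = auxK 0 := by rw [← hβ0]
    nlinarith [auxK_ge_one β hβ]
  · have hlog : Real.log (Real.exp 1 + t) ≤ β / ε * (Real.exp 1 + t) ^ (ε / β) := by
      have h1 : Real.log ((Real.exp 1 + t) ^ (ε / β)) ≤ (Real.exp 1 + t) ^ (ε / β) - 1 :=
        Real.log_le_sub_one_of_pos (Real.rpow_pos_of_pos het _)
      rw [Real.log_rpow het] at h1
      calc Real.log (Real.exp 1 + t) = β / ε * (ε / β * Real.log (Real.exp 1 + t)) := by
              field_simp
        _ ≤ β / ε * (Real.exp 1 + t) ^ (ε / β) := by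
              have h3 : (0:ℝ) ≤ β / ε := by positivity
              nlinarith
    have hlognn : 0 ≤ Real.log (Real.exp 1 + t) := Real.log_nonneg (by linarith)
    have h2 : Real.log (Real.exp 1 + t) ^ β ≤ (β / ε * (Real.exp 1 + t) ^ (ε / β)) ^ β :=
      Real.rpow_le_rpow hlognn hlog hβ
    rw [Real.mul_rpow (by positivity) (by positivity), ← Real.rpow_mul het.le,
      div_mul_cancel₀ ε hβpos.ne'] at h2
    have hdiv : (β / ε) ^ β = β ^ β * ε ^ (-β) := by
      rw [Real.div_rpow hβ hε.le, Real.rpow_neg hε.le, div_eq_mul_inv]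
    have hsub : (Real.exp 1 + t) ^ ε ≤ Real.exp 1 + t ^ ε := by
      have := real_subadd (Real.exp_pos 1).le ht hε.le hε1
      have heε : Real.exp 1 ^ ε ≤ Real.exp 1 := by
        calc Real.exp 1 ^ ε ≤ Real.exp 1 ^ (1:ℝ) :=
              Real.rpow_le_rpow_of_exponent_le he hε1
          _ = Real.exp 1 := Real.rpow_one _
      linarith
    have hB : (0:ℝ) ≤ β ^ β := Real.rpow_nonneg hβ β
    have key1 : (β / ε) ^ β * (Real.exp 1 + t) ^ ε ≤ β ^ β * ε ^ (-β) * (Real.exp 1 + t ^ ε) := by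
      rw [hdiv]
      have h4 : (0:ℝ) ≤ β ^ β * ε ^ (-β) := by positivity
      nlinarith [Real.rpow_nonneg het.le ε]
    have key2 : β ^ β * (Real.exp 1 + t ^ ε) ≤ auxK β * (1 + t ^ ε) := by
      unfold auxK
      nlinarith [mul_nonneg (mul_nonneg (sub_nonneg.2 he) hB) htε,
        mul_nonneg (le_trans zero_le_one he) htε, mul_nonneg hB htε]
    calc Real.log (Real.exp 1 + t) ^ β ≤ β ^ β * ε ^ (-β) * (Real.exp 1 + t ^ ε) :=
          h2.trans key1
      _ = ε ^ (-β) * (β ^ β * (Real.exp 1 + t ^ ε)) := by ring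
      _ ≤ ε ^ (-β) * (auxK β * (1 + t ^ ε)) := by nlinarith
      _ = auxK β * ε ^ (-β) * (1 + t ^ ε) := by ring


lemma ptwise_main (β ε t : ℝ) (hβ : 0 ≤ β) (hε : 0 < ε) (hε1 : ε ≤ 1) (ht : 0 ≤ t) :
    t * Real.log (Real.exp 1 + t) ^ β ≤ auxK β * ε ^ (-β) * (t + t ^ (1 + ε)) := by
  have h1 := ptwise_log β ε t hβ hε hε1 ht
  have h2 : t ^ (1 + ε) = t * t ^ ε := by
    rw [Real.rpow_add' ht (by positivity), Real.rpow_one]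
  rw [h2]
  nlinarith [mul_le_mul_of_nonneg_left h1 ht]

lemma ptwise_delta (g δ ε : ℝ) (hg : 0 ≤ g) (hδ : 0 < δ) (hε : 0 < ε) :
    g ≤ δ + δ ^ (-ε) * g ^ (1 + ε) := by
  have hg1 : (0:ℝ) ≤ δ ^ (-ε) * g ^ (1 + ε) := by positivity
  rcases le_or_gt g δ with h | h
  · linarith
  · have hgpos : 0 < g := lt_trans hδ h
    have h1 : (1:ℝ) ≤ (g / δ) ^ ε := by
      have hd : (1:ℝ) ≤ g / δ := (one_le_div hδ).2 h.le
      calc (1:ℝ) = 1 ^ ε := (Real.one_rpow ε).symm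
        _ ≤ (g / δ) ^ ε := Real.rpow_le_rpow zero_le_one hd hε.le
    have h2 : δ ^ (-ε) * g ^ (1 + ε) = (g / δ) ^ ε * g := by
      rw [Real.rpow_add' hg (by positivity), Real.rpow_one, Real.div_rpow hg hδ.le,
        Real.rpow_neg hδ.le, div_eq_mul_inv]
      ring
    rw [h2]
    nlinarith [mul_le_mul_of_nonneg_right h1 hgpos.le]

lemma lint_mul_le {α : Type*} [MeasurableSpace α] (μ : Measure α) (r : ℝ≥0∞) (hr : r ≠ ∞)
    (h : α → ℝ≥0∞) : ∫⁻ a, r * h a ∂μ ≤ r * ∫⁻ a, h a ∂μ := by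
  rcases eq_or_ne r 0 with rfl | hr0
  · simp
  · have h1 : r⁻¹ * ∫⁻ a, r * h a ∂μ ≤ ∫⁻ a, r⁻¹ * (r * h a) ∂μ :=
      lintegral_const_mul_le _ _
    have h2 : (fun a => r⁻¹ * (r * h a)) = h := by
      funext a; rw [← mul_assoc, ENNReal.inv_mul_cancel hr0 hr, one_mul]
    rw [h2] at h1
    calc ∫⁻ a, r * h a ∂μ = r * (r⁻¹ * ∫⁻ a, r * h a ∂μ) := by
          rw [← mul_assoc, ENNReal.mul_inv_cancel hr0 hr, one_mul]
      _ ≤ r * ∫⁻ a, h a ∂μ := by gcongr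

lemma key_estimate (n : ℕ) (β ε : ℝ) (hβ : 0 ≤ β) (hε : 0 < ε) (hε1 : ε ≤ 1)
    (Q : Set (Fin n → ℝ)) (f : (Fin n → ℝ) → ℝ) (lam δ : ℝ) (hlam : 0 < lam) (hδ : 0 < δ) :
    ∫⁻ y in Q, ENNReal.ofReal
        ((|f y| / lam) * (Real.log (Real.exp 1 + |f y| / lam)) ^ β)
      ≤ ENNReal.ofReal (auxK β * ε ^ (-β) * δ) * volume Q
        + ENNReal.ofReal (auxK β * ε ^ (-β) * (δ ^ (-ε) + 1) * lam ^ (-(1 + ε)))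
            * ∫⁻ y in Q, ENNReal.ofReal (|f y| ^ (1 + ε)) := by
  have hK : (0:ℝ) < auxK β := lt_of_lt_of_le zero_lt_one (auxK_ge_one β hβ)
  set c1 : ℝ := auxK β * ε ^ (-β) * δ with hc1
  set c2 : ℝ := auxK β * ε ^ (-β) * (δ ^ (-ε) + 1) * lam ^ (-(1 + ε)) with hc2
  have hc1nn : 0 ≤ c1 := by positivity
  have hc2nn : 0 ≤ c2 := by positivity
  have step : ∀ y, ENNReal.ofReal
      ((|f y| / lam) * (Real.log (Real.exp 1 + |f y| / lam)) ^ β)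
      ≤ ENNReal.ofReal c1 + ENNReal.ofReal c2 * ENNReal.ofReal (|f y| ^ (1 + ε)) := by
    intro y
    set g : ℝ := |f y| / lam with hgdef
    have hg : 0 ≤ g := by positivity
    have hreal : g * Real.log (Real.exp 1 + g) ^ β ≤ c1 + c2 * |f y| ^ (1 + ε) := by
      have hA := ptwise_main β ε g hβ hε hε1 hg
      have hB := ptwise_delta g δ ε hg hδ hε
      have hgpow : g ^ (1 + ε) = |f y| ^ (1 + ε) * lam ^ (-(1 + ε)) := by
        rw [hgdef, Real.div_rpow (abs_nonneg _) hlam.le, Real.rpow_neg hlam.le,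
          div_eq_mul_inv]
      have hKε : (0:ℝ) ≤ auxK β * ε ^ (-β) := by positivity
      calc g * Real.log (Real.exp 1 + g) ^ β
          ≤ auxK β * ε ^ (-β) * (g + g ^ (1 + ε)) := hA
        _ ≤ auxK β * ε ^ (-β) * ((δ + δ ^ (-ε) * g ^ (1 + ε)) + g ^ (1 + ε)) := by
            have hgp : (0:ℝ) ≤ g ^ (1 + ε) := Real.rpow_nonneg hg _
            nlinarith
        _ = c1 + c2 * |f y| ^ (1 + ε) := by
            rw [hc1, hc2, hgpow]; ring
    calc ENNReal.ofReal (g * Real.log (Real.exp 1 + g) ^ β)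
        ≤ ENNReal.ofReal (c1 + c2 * |f y| ^ (1 + ε)) := ENNReal.ofReal_le_ofReal hreal
      _ = ENNReal.ofReal c1 + ENNReal.ofReal c2 * ENNReal.ofReal (|f y| ^ (1 + ε)) := by
          rw [ENNReal.ofReal_add hc1nn (by positivity), ENNReal.ofReal_mul hc2nn]
  calc ∫⁻ y in Q, ENNReal.ofReal
        ((|f y| / lam) * (Real.log (Real.exp 1 + |f y| / lam)) ^ β)
      ≤ ∫⁻ y in Q, (ENNReal.ofReal c1
          + ENNReal.ofReal c2 * ENNReal.ofReal (|f y| ^ (1 + ε))) :=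
        lintegral_mono fun y => step y
    _ = ENNReal.ofReal c1 * volume Q
          + ∫⁻ y in Q, ENNReal.ofReal c2 * ENNReal.ofReal (|f y| ^ (1 + ε)) := by
        rw [lintegral_add_left measurable_const, setLIntegral_const]
    _ ≤ ENNReal.ofReal c1 * volume Q
          + ENNReal.ofReal c2 * ∫⁻ y in Q, ENNReal.ofReal (|f y| ^ (1 + ε)) := by
        gcongr
        exact lint_mul_le _ _ ENNReal.ofReal_ne_top _


/-- The Luxemburg norm `‖f‖_{L(log L)^β, Q}` on a set `Q ⊂ ℝⁿ`, i.e. the infimum of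
those `λ > 0` for which `|Q|⁻¹ ∫_Q (|f|/λ) log^β(e + |f|/λ) ≤ 1` (value `∞` if no such
`λ` exists). -/
noncomputable def luxNorm (n : ℕ) (β : ℝ) (Q : Set (Fin n → ℝ))
    (f : (Fin n → ℝ) → ℝ) : ℝ≥0∞ :=
  ⨅ (lam : ℝ) (_ : 0 < lam ∧
      ∫⁻ y in Q, ENNReal.ofReal
          ((|f y| / lam) * (Real.log (Real.exp 1 + |f y| / lam)) ^ β)
        ≤ volume Q),
    ENNReal.ofReal lam

/-- `‖f‖_{L(log L)^β, Q} ≤ C(β) ε^{-β} (|Q|⁻¹ ∫_Q |f|^{1+ε})^{1/(1+ε)}`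
for all cubes `Q`, all `ε ∈ (0,1]` and all `f`. -/
theorem stmt_5 (β : ℝ) (hβ : 0 ≤ β) :
    ∃ C : ℝ, 0 < C ∧
      ∀ (n : ℕ) (ε : ℝ), ε ∈ Set.Ioc (0 : ℝ) 1 →
      ∀ (z : Fin n → ℝ) (r : ℝ), 0 < r →
      ∀ f : (Fin n → ℝ) → ℝ,
        luxNorm n β (Metric.closedBall z r) f
          ≤ ENNReal.ofReal (C * ε ^ (-β)) *
            (((volume (Metric.closedBall z r))⁻¹
                * ∫⁻ y in Metric.closedBall z r, ENNReal.ofReal (|f y| ^ (1 + ε)))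
              ^ (1 / (1 + ε))) := by
  have hK1 : (1:ℝ) ≤ auxK β := auxK_ge_one β hβ
  have hK0 : (0:ℝ) < auxK β := by linarith
  refine ⟨3 * auxK β, by linarith, ?_⟩
  rintro n ε ⟨hε0, hε1⟩ z r hr f
  set Q := Metric.closedBall z r with hQ
  have hV0 : volume Q ≠ 0 := (Metric.measure_closedBall_pos volume z hr).ne'
  have hVtop : volume Q ≠ ∞ := measure_closedBall_lt_top.ne
  set I := ∫⁻ y in Q, ENNReal.ofReal (|f y| ^ (1 + ε)) with hI
  have hεβpos : (0:ℝ) < ε ^ (-β) := Real.rpow_pos_of_pos hε0 _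
  have h1ε : (0:ℝ) < 1 + ε := by linarith
  have hεβ : (0:ℝ) < ε ^ β := Real.rpow_pos_of_pos hε0 β
  have hεβ1 : ε ^ β ≤ 1 := Real.rpow_le_one hε0.le hε1 hβ
  rcases eq_or_ne I ∞ with hItop | hItop
  · have h1 : (volume Q)⁻¹ * I = ∞ := by
      rw [hItop, ENNReal.mul_top (ENNReal.inv_ne_zero.2 hVtop)]
    rw [h1, ENNReal.top_rpow_of_pos (by positivity), ENNReal.mul_top]
    · exact le_top
    · rw [Ne, ENNReal.ofReal_eq_zero, not_le]
      positivity
  rcases eq_or_ne I 0 with hI0 | hIne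
  · have hlux : luxNorm n β Q f = 0 := by
      refine le_antisymm ?_ zero_le
      refine ENNReal.le_of_forall_pos_le_add fun η hη _ => ?_
      rw [zero_add]
      have hηpos : (0:ℝ) < (η:ℝ) := by exact_mod_cast hη
      have hδ : (0:ℝ) < ε ^ β / auxK β := by positivity
      have h := key_estimate n β ε hβ hε0 hε1 Q f (η:ℝ) (ε ^ β / auxK β) hηpos hδ
      have hc1 : auxK β * ε ^ (-β) * (ε ^ β / auxK β) = 1 := by
        rw [Real.rpow_neg hε0.le]
        field_simp
      rw [hc1, ← hI, hI0, mul_zero, add_zero, ENNReal.ofReal_one, one_mul] at h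
      calc luxNorm n β Q f ≤ ENNReal.ofReal (η:ℝ) :=
            iInf_le_of_le (η:ℝ) (iInf_le _ ⟨hηpos, h⟩)
        _ = (η : ℝ≥0∞) := ENNReal.ofReal_coe_nnreal
    rw [hlux]; exact zero_le
  · set v : ℝ := (volume Q).toReal with hv
    set i : ℝ := I.toReal with hi
    have hvpos : 0 < v := ENNReal.toReal_pos hV0 hVtop
    have hipos : 0 < i := ENNReal.toReal_pos hIne hItop
    have hVr : volume Q = ENNReal.ofReal v := (ENNReal.ofReal_toReal hVtop).symm
    have hIr : I = ENNReal.ofReal i := (ENNReal.ofReal_toReal hItop).symm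
    set a : ℝ := (i / v) ^ (1 / (1 + ε)) with ha
    have hapos : 0 < a := Real.rpow_pos_of_pos (by positivity) _
    set lam : ℝ := 3 * auxK β * ε ^ (-β) * a with hlam
    have hlampos : 0 < lam := by positivity
    set δ : ℝ := ε ^ β / (3 * auxK β) with hδdef
    have hδpos : 0 < δ := by positivity
    have hδ1 : δ ≤ 1 := by
      rw [hδdef, div_le_one (by positivity)]; nlinarith
    have hapow : a ^ (1 + ε) = i / v := by
      rw [ha, ← Real.rpow_mul (by positivity), one_div_mul_cancel h1ε.ne', Real.rpow_one]
    have halam : a / lam = δ := by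
      rw [hlam, hδdef, Real.rpow_neg hε0.le]
      field_simp
    have f1 : auxK β * ε ^ (-β) * δ = 1/3 := by
      rw [hδdef, Real.rpow_neg hε0.le]
      field_simp
    have f2 : lam ^ (-(1 + ε)) * i = δ ^ (1 + ε) * v := by
      have hieq : i = a ^ (1 + ε) * v := by rw [hapow]; field_simp
      rw [hieq, ← halam, Real.div_rpow hapos.le hlampos.le, Real.rpow_neg hlampos.le,
        div_eq_mul_inv]
      ring
    have f3 : δ ^ (-ε) * δ ^ (1 + ε) = δ := by
      rw [← Real.rpow_add hδpos, show -ε + (1 + ε) = 1 by ring, Real.rpow_one]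
    have f4 : δ ^ (1 + ε) ≤ δ := by
      have := Real.rpow_le_rpow_of_exponent_ge hδpos hδ1 (by linarith : (1:ℝ) ≤ 1 + ε)
      rwa [Real.rpow_one] at this
    have hcond : ∫⁻ y in Q, ENNReal.ofReal
        ((|f y| / lam) * (Real.log (Real.exp 1 + |f y| / lam)) ^ β) ≤ volume Q := by
      have h := key_estimate n β ε hβ hε0 hε1 Q f lam δ hlampos hδpos
      refine h.trans ?_
      rw [← hI, hVr, hIr, ← ENNReal.ofReal_mul (by positivity),
        ← ENNReal.ofReal_mul (by positivity),
        ← ENNReal.ofReal_add (by positivity) (by positivity)]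
      apply ENNReal.ofReal_le_ofReal
      have lhs_eq : auxK β * ε ^ (-β) * (δ ^ (-ε) + 1) * lam ^ (-(1 + ε)) * i
          = auxK β * ε ^ (-β) * (δ + δ ^ (1 + ε)) * v := by
        rw [show auxK β * ε ^ (-β) * (δ ^ (-ε) + 1) * lam ^ (-(1 + ε)) * i
            = auxK β * ε ^ (-β) * ((δ ^ (-ε) + 1) * (lam ^ (-(1 + ε)) * i)) from by ring,
          f2]
        linear_combination (auxK β * ε ^ (-β) * v) * f3
      rw [lhs_eq, f1]
      have hfin : auxK β * ε ^ (-β) * (δ + δ ^ (1 + ε)) ≤ 2/3 := by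
        have h5 := mul_le_mul_of_nonneg_left f4 (by positivity : (0:ℝ) ≤ auxK β * ε ^ (-β))
        nlinarith
      nlinarith
    have hle : luxNorm n β Q f ≤ ENNReal.ofReal lam :=
      iInf_le_of_le lam (iInf_le _ ⟨hlampos, hcond⟩)
    refine hle.trans ?_
    have hRHS : ((volume Q)⁻¹ * I) ^ (1 / (1 + ε)) = ENNReal.ofReal a := by
      have h1 : (volume Q)⁻¹ * I = ENNReal.ofReal (i / v) := by
        rw [ENNReal.ofReal_div_of_pos hvpos, hVr, hIr, ENNReal.div_eq_inv_mul]
      rw [h1, ENNReal.ofReal_rpow_of_pos (by positivity), ha]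
    rw [hRHS, ← ENNReal.ofReal_mul (by positivity)]
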